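/- arXiv:2406.01200 — 2 statements merged into one kernel-verified Lean document; each statement's English description precedes it below -/
import Mathlib

section
/- Let $Y$ be a Poisson random variable with parameter $\alpha > 0$. Then for every integer $n \ge 0$ and every real number $x$, $B_n^{(L,Y)}(x) = \sum_{k=0}^{n} \phi_k(x)\, \alpha^k\, L(n,k)$. -/
open MeasureTheory ProbabilityTheory Finset

/-- The rising factorial `⟨x⟩_n = x (x+1) ⋯ (x+n-1)`, with `⟨x⟩_0 = 1`. -/
noncomputable def asc (x : ℝ) : ℕ → ℝ
  | 0 => 1
  | n + 1 => asc x n * (x + n)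

/-- The probabilistic Lah numbers associated with the random variable `Y`, defined from
the iid copies `Ys` of `Y` via `L_Y(n,k) = (1/k!) ∑_{l=0}^k C(k,l) (-1)^{k-l} E[⟨S_l⟩_n]`,
where `S_l = Y_1 + ⋯ + Y_l`. -/
noncomputable def probLah {Ω : Type*} [MeasurableSpace Ω] (μ : Measure Ω)
    (Ys : ℕ → Ω → ℝ) (n k : ℕ) : ℝ :=
  (k.factorial : ℝ)⁻¹ * ∑ l ∈ Finset.range (k + 1),
    (k.choose l : ℝ) * (-1) ^ (k - l) * ∫ ω, asc (∑ j ∈ Finset.range l, Ys j ω) n ∂μ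

/-- The probabilistic Lah-Bell polynomials `B_n^{(L,Y)}(x) = ∑_{k=0}^n L_Y(n,k) x^k`. -/
noncomputable def probLahBell {Ω : Type*} [MeasurableSpace Ω] (μ : Measure Ω)
    (Ys : ℕ → Ω → ℝ) (n : ℕ) (x : ℝ) : ℝ :=
  ∑ k ∈ Finset.range (n + 1), probLah μ Ys n k * x ^ k

/-- The Stirling number of the second kind `{n k} = (1/k!) ∑_{j=0}^k (-1)^{k-j} C(k,j) j^n`. -/
noncomputable def stirling2 (n k : ℕ) : ℝ :=
  (k.factorial : ℝ)⁻¹ * ∑ j ∈ Finset.range (k + 1),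
    (-1) ^ (k - j) * (k.choose j : ℝ) * (j : ℝ) ^ n

/-- The Bell polynomial `φ_n(x) = ∑_{k=0}^n {n k} x^k`. -/
noncomputable def bellPoly (n : ℕ) (x : ℝ) : ℝ :=
  ∑ k ∈ Finset.range (n + 1), stirling2 n k * x ^ k

/-- The unsigned Lah numbers: `L(n,k) = n!/k! · C(n-1,k-1)` for `1 ≤ k ≤ n`,
with `L(0,0) = 1` and `L(n,0) = 0` for `n ≥ 1`. -/
noncomputable def Lah (n k : ℕ) : ℝ :=
  if k = 0 then (if n = 0 then 1 else 0)
  else if k ≤ n then (n.factorial : ℝ) / (k.factorial : ℝ) * ((n - 1).choose (k - 1) : ℝ)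
  else 0

/-- The Lah-Bell polynomial `B_n^L(x) = ∑_{k=0}^n L(n,k) x^k`. -/
noncomputable def LahBell (n : ℕ) (x : ℝ) : ℝ :=
  ∑ k ∈ Finset.range (n + 1), Lah n k * x ^ k

section AuxProof
lemma Lah_zero_right (n : ℕ) : Lah n 0 = if n = 0 then 1 else 0 := by simp [Lah]

lemma Lah_eq_zero_of_lt {n k : ℕ} (h : n < k) : Lah n k = 0 := by
  have hk : k ≠ 0 := by omega
  simp [Lah, hk, not_le.2 h]

lemma Lah_self (n : ℕ) : Lah n n = 1 := by
  rcases Nat.eq_zero_or_pos n with h | h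
  · simp [Lah, h]
  · have : n ≠ 0 := by omega
    simp [Lah, this, div_self (by positivity : (n.factorial : ℝ) ≠ 0)]

lemma Lah_succ_succ (n k : ℕ) :
    Lah (n+1) (k+1) = Lah n k + ((n : ℝ) + k + 1) * Lah n (k+1) := by
  rcases lt_or_ge n k with h | h
  · rw [Lah_eq_zero_of_lt (by omega), Lah_eq_zero_of_lt h, Lah_eq_zero_of_lt (by omega)]
    ring
  rcases eq_or_lt_of_le h with rfl | hkn
  · rw [Lah_self, Lah_self, Lah_eq_zero_of_lt (by omega)]; ring
  -- k < n
  rcases Nat.eq_zero_or_pos k with rfl | hk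
  · -- k = 0, n ≥ 1
    obtain ⟨m, rfl⟩ : ∃ m, n = m + 1 := ⟨n-1, by omega⟩
    simp only [Lah, if_neg (by omega : ¬ (0:ℕ)+1 = 0), if_pos (by omega : 0+1 ≤ m+1+1),
      if_pos rfl, if_neg (by omega : ¬ m+1 = 0), if_pos (by omega : 0+1 ≤ m+1)]
    norm_num [Nat.factorial_succ]
  -- 1 ≤ k < n
  obtain ⟨j, rfl⟩ : ∃ j, k = j + 1 := ⟨k-1, by omega⟩
  obtain ⟨m, rfl⟩ : ∃ m, n = m + 1 := ⟨n-1, by omega⟩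
  have hjm : j < m := by omega
  have hp : ((m+1).choose (j+1) : ℝ) = (m.choose j : ℝ) + (m.choose (j+1) : ℝ) := by
    rw [Nat.choose_succ_succ]; push_cast; ring
  have hr : ((m.choose (j+1) : ℝ)) * ((j:ℝ)+1) = (m.choose j : ℝ) * ((m:ℝ) - (j:ℝ)) := by
    have := Nat.choose_succ_right_eq m j
    have h2 : ((m.choose (j+1):ℝ)) * ((j:ℝ)+1) = (m.choose j : ℝ) * (((m - j : ℕ)) : ℝ) := by
      exact_mod_cast this
    rw [Nat.cast_sub hjm.le] at h2
    linarith [h2]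
  have hkey : ((m:ℝ)+2) * ((m+1).choose (j+1) : ℝ)
      = ((j:ℝ)+2) * (m.choose j : ℝ) + ((m:ℝ)+(j:ℝ)+3) * (m.choose (j+1) : ℝ) := by
    rw [hp]; linear_combination -hr
  simp only [Lah, if_neg (by omega : ¬ j+2 = 0), if_neg (by omega : ¬ j+1 = 0),
    if_pos (by omega : j+2 ≤ m+2), if_pos (by omega : j+1 ≤ m+1), if_pos (by omega : j+2 ≤ m+1),
    show m+1+1 = m+2 from rfl, show j+1+1 = j+2 from rfl]
  simp only [show m+2-1 = m+1 from rfl, show j+2-1 = j+1 from rfl,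
    show m+1-1 = m from rfl, show j+1-1 = j from rfl]
  rw [Nat.factorial_succ (m+1), Nat.factorial_succ (j+1)]
  have ha : ((m+1).factorial : ℝ) ≠ 0 := by positivity
  have hb : ((j+1).factorial : ℝ) ≠ 0 := by positivity
  push_cast
  field_simp
  linear_combination hkey

noncomputable def dsc (x : ℝ) : ℕ → ℝ
  | 0 => 1
  | n + 1 => dsc x n * (x - n)

lemma asc_eq_sum (x : ℝ) (n : ℕ) :
    asc x n = ∑ m ∈ range (n+1), Lah n m * dsc x m := by
  induction n with
  | zero => simp [asc, dsc, Lah]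
  | succ n ih =>
    have expand : ∀ m : ℕ, dsc x m * (x + n) = dsc x (m+1) + ((n:ℝ) + m) * dsc x m := by
      intro m; rw [show dsc x (m+1) = dsc x m * (x - m) from rfl]; ring
    calc asc x (n+1) = (∑ m ∈ range (n+1), Lah n m * dsc x m) * (x + n) := by
          rw [show asc x (n+1) = asc x n * (x + n) from rfl, ih]
      _ = ∑ m ∈ range (n+1), Lah n m * dsc x (m+1)
          + ∑ m ∈ range (n+1), ((n:ℝ) + m) * Lah n m * dsc x m := by
          rw [sum_mul, ← sum_add_distrib]
          refine sum_congr rfl fun m _ => ?_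
          rw [mul_assoc (Lah n m), expand m]; ring
      _ = ∑ m ∈ range (n+2), Lah (n+1) m * dsc x m := by
          rw [sum_range_succ' (fun m => Lah (n+1) m * dsc x m) (n+1)]
          rw [sum_range_succ' (fun m => ((n:ℝ) + m) * Lah n m * dsc x m) n]
          have h0 : Lah (n+1) 0 * dsc x 0 = 0 := by
            rw [Lah_zero_right]; simp
          have h0' : ((n:ℝ) + (0:ℕ)) * Lah n 0 * dsc x 0 = 0 := by
            rcases Nat.eq_zero_or_pos n with rfl | h
            · simp
            · rw [Lah_zero_right, if_neg (by omega)]; ring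
          rw [h0, h0', add_zero, add_zero]
          -- LHS first sum over range (n+1) of Lah n m * dsc x (m+1);
          -- RHS sum over range (n+1) of Lah (n+1) (m+1) * dsc x (m+1)
          rw [show ∑ m ∈ range (n+1), Lah n m * dsc x (m+1)
              = ∑ m ∈ range (n+1), Lah n m * dsc x (m+1) from rfl]
          have : ∀ m ∈ range (n+1), Lah (n+1) (m+1) * dsc x (m+1)
              = Lah n m * dsc x (m+1) + ((n:ℝ) + (m+1)) * Lah n (m+1) * dsc x (m+1) := by
            intro m _
            rw [Lah_succ_succ]; push_cast; ring
          rw [sum_congr rfl this, sum_add_distrib]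
          congr 1
          -- ∑_{m ∈ range (n+1)} (n+m+1) Lah n (m+1) dsc x (m+1) vs range n version
          rw [sum_range_succ]
          rw [Lah_eq_zero_of_lt (by omega : n < n+1)]
          simp


lemma dsc_natCast (i m : ℕ) : dsc (i:ℝ) m = (i.descFactorial m : ℝ) := by
  induction m with
  | zero => simp [dsc]
  | succ m ih =>
    rw [show dsc (i:ℝ) (m+1) = dsc (i:ℝ) m * ((i:ℝ) - m) from rfl, ih,
      Nat.descFactorial_succ]
    rcases le_or_gt m i with h | h
    · push_cast [Nat.cast_sub h]; ring
    · rw [Nat.descFactorial_eq_zero_iff_lt.2 h]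
      simp [Nat.sub_eq_zero_of_le h.le]

lemma alt_sum_vanish : ∀ m k : ℕ, m < k →
    ∑ j ∈ range (k+1), (-1:ℝ)^j * (k.choose j : ℝ) * (j:ℝ)^m = 0 := by
  intro m
  induction m using Nat.strong_induction_on with
  | _ m IH =>
    intro k hk
    match m with
    | 0 =>
      have h := Int.alternating_sum_range_choose_of_ne (show k ≠ 0 by omega)
      have : ((∑ i ∈ range (k+1), (-1:ℤ)^i * (k.choose i) : ℤ) : ℝ) = 0 := by
        rw [h]; norm_num
      push_cast at this
      simpa using this
    | m + 1 =>
      rw [sum_range_succ' _ k]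
      simp only [pow_zero, Nat.cast_zero, ne_eq]
      rw [show ((0:ℝ))^(m+1) = 0 by simp, mul_zero, add_zero]
      have hk1 : 1 ≤ k := by omega
      obtain ⟨k', rfl⟩ : ∃ k', k = k' + 1 := ⟨k-1, by omega⟩
      have key : ∀ j ∈ range (k'+1),
          (-1:ℝ)^(j+1) * ((k'+1).choose (j+1) : ℝ) * ((j:ℝ)+1)^(m+1)
          = -((k':ℝ)+1) * ((-1:ℝ)^j * (k'.choose j : ℝ)
              * ∑ t ∈ range (m+1), (m.choose t : ℝ) * (j:ℝ)^t) := by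
        intro j _
        have hc : ((k'+1) : ℝ) * (k'.choose j : ℝ) = ((k'+1).choose (j+1) : ℝ) * ((j:ℝ)+1) := by
          exact_mod_cast congrArg (Nat.cast : ℕ → ℝ) (Nat.add_one_mul_choose_eq k' j)
        have hb : ((j:ℝ)+1)^(m+1) = ((j:ℝ)+1) * ((j:ℝ)+1)^m := by ring
        have hbin : ((j:ℝ)+1)^m = ∑ t ∈ range (m+1), (m.choose t : ℝ) * (j:ℝ)^t := by
          rw [add_pow]
          refine sum_congr rfl fun t _ => ?_
          rw [one_pow]; ring
        rw [hb, hbin]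
        linear_combination ((-1:ℝ)^j * (∑ t ∈ range (m+1), (m.choose t : ℝ) * (j:ℝ)^t)) * hc
      push_cast
      rw [sum_congr rfl key, ← mul_sum]
      have hz : ∑ j ∈ range (k'+1), ((-1:ℝ)^j * (k'.choose j : ℝ)
          * ∑ t ∈ range (m+1), (m.choose t : ℝ) * (j:ℝ)^t) = 0 := by
        have hswap : ∑ j ∈ range (k'+1), ((-1:ℝ)^j * (k'.choose j : ℝ)
            * ∑ t ∈ range (m+1), (m.choose t : ℝ) * (j:ℝ)^t)
            = ∑ t ∈ range (m+1), (m.choose t : ℝ)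
              * ∑ j ∈ range (k'+1), (-1:ℝ)^j * (k'.choose j : ℝ) * (j:ℝ)^t := by
          simp_rw [mul_sum]
          rw [sum_comm]
          refine sum_congr rfl fun t _ => sum_congr rfl fun j _ => ?_
          ring
        rw [hswap]
        refine sum_eq_zero fun t ht => ?_
        have htm : t < m + 1 := mem_range.mp ht
        rw [IH t htm k' (by omega), mul_zero]
      rw [hz, mul_zero]

noncomputable def pois (lam : ℝ) (i : ℕ) : ℝ := Real.exp (-lam) * lam ^ i / i.factorial

lemma pois_nonneg {lam : ℝ} (h : 0 ≤ lam) (i : ℕ) : 0 ≤ pois lam i := by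
  unfold pois; positivity

lemma exp_eq_tsum (x : ℝ) : Real.exp x = ∑' n : ℕ, x ^ n / n.factorial := by
  rw [Real.exp_eq_exp_ℝ, NormedSpace.exp_eq_tsum_div]

lemma pois_shift (lam : ℝ) (m i : ℕ) :
    pois lam (i + m) * ((i + m).descFactorial m : ℝ) =
      Real.exp (-lam) * lam ^ m * (lam ^ i / i.factorial) := by
  have hfac : (i.factorial : ℝ) * ((i+m).descFactorial m : ℝ) = ((i+m).factorial : ℝ) := by
    have := Nat.factorial_mul_descFactorial (show m ≤ i + m by omega)
    rw [show i + m - m = i by omega] at this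
    exact_mod_cast this
  have h1 : ((i+m).factorial : ℝ) ≠ 0 := by positivity
  have h2 : (i.factorial : ℝ) ≠ 0 := by positivity
  unfold pois
  rw [pow_add]
  field_simp
  linear_combination (lam ^ i * lam ^ m) * hfac

lemma summable_pois_desc (lam : ℝ) (m : ℕ) :
    Summable (fun i : ℕ => pois lam i * (i.descFactorial m : ℝ)) := by
  rw [← summable_nat_add_iff m]
  simp_rw [pois_shift lam m]
  exact (Real.summable_pow_div_factorial lam).mul_left _

lemma tsum_pois_desc (lam : ℝ) (m : ℕ) :
    ∑' i : ℕ, pois lam i * (i.descFactorial m : ℝ) = lam ^ m := by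
  have hs := summable_pois_desc lam m
  rw [← Summable.sum_add_tsum_nat_add m hs]
  have h1 : ∑ i ∈ range m, pois lam i * (i.descFactorial m : ℝ) = 0 := by
    refine sum_eq_zero fun i hi => ?_
    rw [Nat.descFactorial_eq_zero_iff_lt.2 (mem_range.mp hi)]
    simp
  rw [h1, zero_add]
  simp_rw [pois_shift lam m]
  rw [tsum_mul_left, ← exp_eq_tsum]
  rw [mul_comm (Real.exp (-lam)) (lam ^ m), mul_assoc, ← Real.exp_add]
  simp

variable {Ω : Type*} [MeasurableSpace Ω] (μ : Measure Ω) [IsProbabilityMeasure μ]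
lemma summable_pois (lam : ℝ) : Summable (pois lam) := by
  have := summable_pois_desc lam 0
  simpa using this

lemma tsum_pois (lam : ℝ) : ∑' i : ℕ, pois lam i = 1 := by
  have := tsum_pois_desc lam 0
  simpa using this

variable {Ω : Type*} [MeasurableSpace Ω] (μ : Measure Ω) [IsProbabilityMeasure μ]

lemma compl_null {Z : Ω → ℝ} (hZ : Measurable Z) {lam : ℝ} (hlam : 0 ≤ lam)
    (h : ∀ i : ℕ, μ {ω | Z ω = (i:ℝ)} = ENNReal.ofReal (pois lam i)) :
    μ (⋃ i : ℕ, {ω | Z ω = (i:ℝ)})ᶜ = 0 := by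
  have hmeas : ∀ i : ℕ, MeasurableSet {ω | Z ω = (i:ℝ)} := fun i =>
    hZ (measurableSet_singleton _)
  have hdisj : Pairwise (Function.onFun Disjoint (fun i : ℕ => {ω | Z ω = (i:ℝ)})) := by
    intro i j hij
    refine Set.disjoint_left.2 fun ω hi hj => hij ?_
    exact_mod_cast (hi.symm.trans hj : ((i:ℝ)) = j)
  have hA : μ (⋃ i : ℕ, {ω | Z ω = (i:ℝ)}) = 1 := by
    rw [measure_iUnion hdisj hmeas]
    simp_rw [h]
    rw [← ENNReal.ofReal_tsum_of_nonneg (pois_nonneg hlam) (summable_pois lam), tsum_pois]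
    simp
  rw [measure_compl (MeasurableSet.iUnion hmeas) (measure_ne_top μ _), hA]
  simp

lemma map_eq_sum {Z : Ω → ℝ} (hZ : Measurable Z) {lam : ℝ} (hlam : 0 ≤ lam)
    (h : ∀ i : ℕ, μ {ω | Z ω = (i:ℝ)} = ENNReal.ofReal (pois lam i)) :
    Measure.map Z μ = Measure.sum
      (fun i : ℕ => ENNReal.ofReal (pois lam i) • Measure.dirac ((i : ℕ) : ℝ)) := by
  ext s hs
  rw [Measure.map_apply hZ hs, Measure.sum_apply _ hs]
  have hmeas : ∀ i : ℕ, MeasurableSet {ω | Z ω = (i:ℝ)} := fun i =>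
    hZ (measurableSet_singleton _)
  set A := ⋃ i : ℕ, {ω | Z ω = (i:ℝ)} with hAdef
  have hAc : μ Aᶜ = 0 := compl_null μ hZ hlam h
  have h1 : μ (Z ⁻¹' s) = μ (Z ⁻¹' s ∩ A) := by
    refine (measure_inter_add_diff (Z ⁻¹' s) (MeasurableSet.iUnion hmeas)).symm.trans ?_
    have h2 : μ (Z ⁻¹' s \ A) = 0 :=
      measure_mono_null (fun ω hω => hω.2) hAc
    rw [h2, add_zero]
  rw [h1, hAdef, Set.inter_iUnion]
  have hdisj2 : Pairwise (Function.onFun Disjoint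
      (fun i : ℕ => Z ⁻¹' s ∩ {ω | Z ω = (i:ℝ)})) := by
    intro i j hij
    refine Set.disjoint_left.2 fun ω hi hj => hij ?_
    exact_mod_cast (hi.2.symm.trans hj.2 : ((i:ℝ)) = j)
  rw [measure_iUnion hdisj2 (fun i => (hZ hs).inter (hmeas i))]
  refine tsum_congr fun i => ?_
  rw [Measure.smul_apply, Measure.dirac_apply' _ hs, smul_eq_mul]
  by_cases hin : ((i:ℕ):ℝ) ∈ s
  · have : Z ⁻¹' s ∩ {ω | Z ω = (i:ℝ)} = {ω | Z ω = (i:ℝ)} := by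
      ext ω; constructor
      · exact fun hω => hω.2
      · exact fun hω => ⟨by simp [Set.mem_preimage, hω.out, hin], hω⟩
    rw [this, h i, Set.indicator_of_mem hin]
    simp
  · have : Z ⁻¹' s ∩ {ω | Z ω = (i:ℝ)} = ∅ := by
      ext ω
      simp only [Set.mem_inter_iff, Set.mem_empty_iff_false, iff_false, not_and]
      intro hω hω2
      exact hin (hω2 ▸ hω)
    rw [this, Set.indicator_of_notMem hin]
    simp

lemma integral_pois {Z : Ω → ℝ} (hZ : Measurable Z) {lam : ℝ} (hlam : 0 ≤ lam)
    (h : ∀ i : ℕ, μ {ω | Z ω = (i:ℝ)} = ENNReal.ofReal (pois lam i))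
    {g : ℝ → ℝ} (hg : Measurable g)
    (hsum : Summable (fun i : ℕ => pois lam i * |g i|)) :
    ∫ ω, g (Z ω) ∂μ = ∑' i : ℕ, pois lam i * g i := by
  rw [← integral_map hZ.aemeasurable hg.aestronglyMeasurable, map_eq_sum μ hZ hlam h]
  have habs : ∀ i : ℕ, 0 ≤ pois lam i * |g i| :=
    fun i => mul_nonneg (pois_nonneg hlam i) (abs_nonneg _)
  have hint : Integrable g (Measure.sum
      (fun i : ℕ => ENNReal.ofReal (pois lam i) • Measure.dirac ((i:ℕ):ℝ))) := by
    refine ⟨hg.aestronglyMeasurable, ?_⟩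
    rw [HasFiniteIntegral, lintegral_sum_measure]
    have heach : ∀ i : ℕ, ∫⁻ a, ‖g a‖ₑ ∂(ENNReal.ofReal (pois lam i) • Measure.dirac ((i:ℕ):ℝ))
        = ENNReal.ofReal (pois lam i * |g i|) := by
      intro i
      rw [lintegral_smul_measure, lintegral_dirac' _ hg.enorm,
        Real.enorm_eq_ofReal_abs, smul_eq_mul, ← ENNReal.ofReal_mul (pois_nonneg hlam i)]
    rw [tsum_congr heach, ← ENNReal.ofReal_tsum_of_nonneg habs hsum]
    exact ENNReal.ofReal_lt_top
  rw [integral_sum_measure hint]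
  refine tsum_congr fun i => ?_
  rw [integral_smul_measure, integral_dirac' _ _ hg.stronglyMeasurable,
    ENNReal.toReal_ofReal (pois_nonneg hlam i), smul_eq_mul]

lemma pois_conv (a b : ℝ) (i : ℕ) :
    ∑ j ∈ range (i+1), pois a j * pois b (i - j) = pois (a + b) i := by
  have key : ∀ j ∈ range (i+1), pois a j * pois b (i - j)
      = Real.exp (-(a+b)) / i.factorial * (a^j * b^(i-j) * (i.choose j : ℕ)) := by
    intro j hj
    have hji : j ≤ i := Nat.lt_succ_iff.mp (mem_range.mp hj)
    have hfac : ((i.choose j : ℝ)) * (j.factorial : ℝ) * (((i-j).factorial : ℝ)) = (i.factorial : ℝ) := by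
      exact_mod_cast congrArg (Nat.cast : ℕ → ℝ) (Nat.choose_mul_factorial_mul_factorial hji)
    have h1 : (j.factorial : ℝ) ≠ 0 := by positivity
    have h2 : (((i-j).factorial : ℝ)) ≠ 0 := by positivity
    have hexp : Real.exp (-a) * Real.exp (-b) = Real.exp (-(a+b)) := by
      rw [← Real.exp_add]; ring_nf
    unfold pois
    rw [← hexp]
    field_simp
    linear_combination (-(a^j * b^(i-j))) * hfac
  rw [sum_congr rfl key, ← mul_sum]
  rw [show ∑ j ∈ range (i+1), a^j * b^(i-j) * ((i.choose j : ℕ):ℝ) = (a+b)^i from (add_pow a b i).symm]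
  unfold pois
  ring

theorem law_sum {Ω : Type*} [MeasurableSpace Ω] (μ : Measure Ω) [IsProbabilityMeasure μ]
    (Y : Ω → ℝ) (Ys : ℕ → Ω → ℝ)
    (hY : Measurable Y) (hYs : ∀ j, Measurable (Ys j))
    (hid : ∀ j, IdentDistrib (Ys j) Y μ μ)
    (hindep : iIndepFun Ys μ)
    (α : ℝ) (hα : 0 < α)
    (hpois : ∀ i : ℕ, μ {ω | Y ω = (i : ℝ)} = ENNReal.ofReal (pois α i)) :
    ∀ l (i : ℕ), μ {ω | (∑ j ∈ Finset.range l, Ys j ω) = (i:ℝ)}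
      = ENNReal.ofReal (pois ((l:ℝ) * α) i) := by
  intro l
  induction l with
  | zero =>
    intro i
    simp only [range_zero, sum_empty, Nat.cast_zero, zero_mul]
    rcases Nat.eq_zero_or_pos i with rfl | hi
    · have : {ω : Ω | (0:ℝ) = ((0:ℕ):ℝ)} = Set.univ := by
        ext ω; simp
      rw [this]
      simp [pois]
    · have : {ω : Ω | (0:ℝ) = ((i:ℕ):ℝ)} = ∅ := by
        ext ω
        simp only [Set.mem_setOf_eq, Set.mem_empty_iff_false, iff_false]
        exact_mod_cast fun h0 => (by omega : i ≠ 0) (by exact_mod_cast h0.symm)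
      rw [this]
      rw [pois, zero_pow (by omega : i ≠ 0)]
      simp
  | succ l IH =>
    intro i
    set T : Ω → ℝ := fun ω => ∑ j ∈ Finset.range l, Ys j ω with hTdef
    set W : Ω → ℝ := Ys l with hWdef
    have hT : Measurable T := Finset.measurable_sum _ (fun j _ => hYs j)
    have hW : Measurable W := hYs l
    have hTW : IndepFun T W μ := by
      have h := hindep.indepFun_sum_range_succ hYs l
      have : (∑ j ∈ Finset.range l, Ys j) = T := by
        funext ω; rw [hTdef]; simp [Finset.sum_apply]
      rwa [this] at h
    have hTlaw : ∀ i : ℕ, μ {ω | T ω = (i:ℝ)} = ENNReal.ofReal (pois ((l:ℝ)*α) i) := IH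
    have hWlaw : ∀ i : ℕ, μ {ω | W ω = (i:ℝ)} = ENNReal.ofReal (pois α i) := by
      intro i
      have := (hid l).measure_mem_eq (measurableSet_singleton ((i:ℕ):ℝ))
      simpa [Set.preimage, Set.mem_singleton_iff] using this.trans (hpois i)
    have hsum_eq : ∀ ω, ∑ j ∈ Finset.range (l+1), Ys j ω = T ω + W ω := by
      intro ω; rw [Finset.sum_range_succ]
    have hset : {ω | (∑ j ∈ Finset.range (l+1), Ys j ω) = (i:ℝ)}
        = {ω | T ω + W ω = (i:ℝ)} := by
      ext ω; simp [hsum_eq ω]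
    rw [hset]
    -- null complement sets
    set AT := ⋃ j : ℕ, {ω | T ω = (j:ℝ)} with hATdef
    set AW := ⋃ j : ℕ, {ω | W ω = (j:ℝ)} with hAWdef
    have hATc : μ ATᶜ = 0 := compl_null μ hT (by positivity) hTlaw
    have hAWc : μ AWᶜ = 0 := compl_null μ hW hα.le hWlaw
    have hmeasT : ∀ j : ℕ, MeasurableSet {ω | T ω = (j:ℝ)} :=
      fun j => hT (measurableSet_singleton _)
    have hmeasW : ∀ j : ℕ, MeasurableSet {ω | W ω = (j:ℝ)} :=
      fun j => hW (measurableSet_singleton _)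
    have hmeasAT : MeasurableSet AT := MeasurableSet.iUnion hmeasT
    have hmeasAW : MeasurableSet AW := MeasurableSet.iUnion hmeasW
    have hE : {ω | T ω + W ω = (i:ℝ)} ∩ (AT ∩ AW)
        = ⋃ j ∈ Finset.range (i+1), ({ω | T ω = (j:ℝ)} ∩ {ω | W ω = ((i-j : ℕ):ℝ)}) := by
      ext ω
      constructor
      · rintro ⟨hωs, hωT, hωW⟩
        obtain ⟨j0, hj0⟩ := Set.mem_iUnion.mp hωT
        obtain ⟨j1, hj1⟩ := Set.mem_iUnion.mp hωW
        have hadd : j0 + j1 = i := by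
          have : ((j0 + j1 : ℕ) : ℝ) = (i:ℝ) := by
            push_cast
            rw [← hj0.out, ← hj1.out]
            exact hωs
          exact_mod_cast this
        refine Set.mem_biUnion (Finset.mem_range.mpr (by omega : j0 < i + 1)) ?_
        refine ⟨hj0, ?_⟩
        show W ω = ((i - j0 : ℕ):ℝ)
        rw [show i - j0 = j1 by omega]
        exact hj1
      · intro hω
        obtain ⟨j, hjmem, hωj⟩ := Set.mem_iUnion₂.mp hω
        have hji : j ≤ i := Nat.lt_succ_iff.mp (Finset.mem_range.mp hjmem)
        refine ⟨?_, Set.mem_iUnion.mpr ⟨j, hωj.1⟩, Set.mem_iUnion.mpr ⟨i - j, hωj.2⟩⟩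
        show T ω + W ω = (i:ℝ)
        rw [hωj.1.out, hωj.2.out]
        push_cast [Nat.cast_sub hji]
        ring
    have hmu : μ {ω | T ω + W ω = (i:ℝ)} = μ ({ω | T ω + W ω = (i:ℝ)} ∩ (AT ∩ AW)) := by
      have hm : MeasurableSet ({ω | T ω + W ω = (i:ℝ)}) :=
        (hT.add hW) (measurableSet_singleton _)
      have hnull : μ (AT ∩ AW)ᶜ = 0 := by
        rw [Set.compl_inter]
        exact le_antisymm (le_trans (measure_union_le _ _) (by rw [hATc, hAWc]; simp))
          zero_le
      rw [← measure_inter_add_diff {ω | T ω + W ω = (i:ℝ)} (hmeasAT.inter hmeasAW)]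
      have : μ ({ω | T ω + W ω = (i:ℝ)} \ (AT ∩ AW)) = 0 :=
        measure_mono_null (fun ω hω => hω.2) hnull
      rw [this, add_zero]
    rw [hmu, hE]
    have hdisj : Set.PairwiseDisjoint (Finset.range (i+1) : Set ℕ)
        (fun j : ℕ => {ω | T ω = (j:ℝ)} ∩ {ω | W ω = ((i-j : ℕ):ℝ)}) := by
      intro j1 _ j2 _ hne
      refine Set.disjoint_left.2 fun ω h1 h2 => hne ?_
      exact_mod_cast (h1.1.out.symm.trans h2.1.out : ((j1:ℝ)) = j2)
    rw [measure_biUnion_finset hdisj (fun j _ => (hmeasT j).inter (hmeasW (i-j)))]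
    have hterm : ∀ j ∈ Finset.range (i+1),
        μ ({ω | T ω = (j:ℝ)} ∩ {ω | W ω = ((i-j : ℕ):ℝ)})
        = ENNReal.ofReal (pois ((l:ℝ)*α) j * pois α (i-j)) := by
      intro j _
      have := hTW.measure_inter_preimage_eq_mul {((j:ℕ):ℝ)} {((i-j:ℕ):ℝ)}
        (measurableSet_singleton _) (measurableSet_singleton _)
      have hpre : T ⁻¹' {((j:ℕ):ℝ)} = {ω | T ω = (j:ℝ)} := rfl
      have hpre2 : W ⁻¹' {((i-j:ℕ):ℝ)} = {ω | W ω = ((i-j:ℕ):ℝ)} := rfl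
      rw [hpre, hpre2] at this
      rw [this, hTlaw j, hWlaw (i-j),
        ← ENNReal.ofReal_mul (pois_nonneg (by positivity) j)]
    rw [Finset.sum_congr rfl hterm, ← ENNReal.ofReal_sum_of_nonneg
      (fun j _ => mul_nonneg (pois_nonneg (by positivity) j) (pois_nonneg hα.le _))]
    rw [pois_conv]
    congr 1
    push_cast
    ring

lemma measurable_asc (n : ℕ) : Measurable (fun x : ℝ => asc x n) := by
  induction n with
  | zero => simpa [asc] using measurable_const
  | succ n ih =>
    have : (fun x : ℝ => asc x (n+1)) = fun x => asc x n * (x + n) := rfl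
    rw [this]
    exact ih.mul (measurable_id.add measurable_const)

lemma asc_nonneg {x : ℝ} (hx : 0 ≤ x) (n : ℕ) : 0 ≤ asc x n := by
  induction n with
  | zero => simp [asc]
  | succ n ih => exact mul_nonneg ih (by positivity)

lemma asc_nat_expand (i n : ℕ) :
    asc (i:ℝ) n = ∑ m ∈ range (n+1), Lah n m * (i.descFactorial m : ℝ) := by
  rw [asc_eq_sum]
  exact sum_congr rfl fun m _ => by rw [dsc_natCast]

lemma E_asc {Ω : Type*} [MeasurableSpace Ω] (μ : Measure Ω) [IsProbabilityMeasure μ]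
    {Z : Ω → ℝ} (hZ : Measurable Z) {lam : ℝ} (hlam : 0 ≤ lam)
    (h : ∀ i : ℕ, μ {ω | Z ω = (i:ℝ)} = ENNReal.ofReal (pois lam i)) (n : ℕ) :
    ∫ ω, asc (Z ω) n ∂μ = ∑ m ∈ range (n+1), Lah n m * lam ^ m := by
  have hsummand : ∀ m ∈ range (n+1),
      Summable (fun i : ℕ => Lah n m * (pois lam i * (i.descFactorial m : ℝ))) :=
    fun m _ => (summable_pois_desc lam m).mul_left _
  have hfun : (fun i : ℕ => pois lam i * asc (i:ℝ) n)
      = fun i : ℕ => ∑ m ∈ range (n+1), Lah n m * (pois lam i * (i.descFactorial m : ℝ)) := by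
    funext i
    rw [asc_nat_expand, mul_sum]
    exact sum_congr rfl fun m _ => by ring
  have hsum0 : Summable (fun i : ℕ => pois lam i * asc (i:ℝ) n) := by
    rw [hfun]
    exact summable_sum hsummand
  have habs : Summable (fun i : ℕ => pois lam i * |asc (i:ℝ) n|) := by
    have : (fun i : ℕ => pois lam i * |asc (i:ℝ) n|)
        = fun i : ℕ => pois lam i * asc (i:ℝ) n := by
      funext i
      rw [abs_of_nonneg (asc_nonneg (by positivity) n)]
    rw [this]; exact hsum0
  rw [integral_pois μ hZ hlam h (measurable_asc n) habs]
  calc ∑' i : ℕ, pois lam i * asc (i:ℝ) n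
      = ∑' i : ℕ, ∑ m ∈ range (n+1), Lah n m * (pois lam i * (i.descFactorial m : ℝ)) := by
        rw [hfun]
    _ = ∑ m ∈ range (n+1), ∑' i : ℕ, Lah n m * (pois lam i * (i.descFactorial m : ℝ)) :=
        Summable.tsum_finsetSum hsummand
    _ = ∑ m ∈ range (n+1), Lah n m * lam ^ m := by
        refine sum_congr rfl fun m _ => ?_
        rw [tsum_mul_left, tsum_pois_desc]

lemma neg_one_pow_sub {j k : ℕ} (h : j ≤ k) :
    ((-1:ℝ))^(k-j) = (-1:ℝ)^k * (-1:ℝ)^j := by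
  have h1 : ((-1:ℝ))^(k-j) * (-1:ℝ)^j = (-1:ℝ)^k := by
    rw [← pow_add]; congr 1; omega
  have h2 : ((-1:ℝ)^j) * ((-1:ℝ)^j) = 1 := by
    rw [← pow_add]
    exact Even.neg_one_pow ⟨j, rfl⟩
  calc ((-1:ℝ))^(k-j) = ((-1:ℝ))^(k-j) * (((-1:ℝ)^j) * ((-1:ℝ)^j)) := by rw [h2, mul_one]
    _ = (((-1:ℝ))^(k-j) * (-1:ℝ)^j) * (-1:ℝ)^j := by ring
    _ = (-1:ℝ)^k * (-1:ℝ)^j := by rw [h1]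

lemma stirling2_vanish {m k : ℕ} (h : m < k) : stirling2 m k = 0 := by
  unfold stirling2
  have : ∑ j ∈ range (k+1), (-1:ℝ)^(k-j) * (k.choose j : ℝ) * (j:ℝ)^m
      = (-1:ℝ)^k * ∑ j ∈ range (k+1), (-1:ℝ)^j * (k.choose j : ℝ) * (j:ℝ)^m := by
    rw [mul_sum]
    refine sum_congr rfl fun j hj => ?_
    rw [neg_one_pow_sub (Nat.lt_succ_iff.mp (mem_range.mp hj))]
    ring
  rw [this, alt_sum_vanish m k h]
  simp

end AuxProof
theorem statement_13 {Ω : Type*} [MeasurableSpace Ω] (μ : Measure Ω) [IsProbabilityMeasure μ]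
    (Y : Ω → ℝ) (Ys : ℕ → Ω → ℝ)
    (hY : Measurable Y) (hYs : ∀ j, Measurable (Ys j))
    (hid : ∀ j, IdentDistrib (Ys j) Y μ μ)
    (hindep : iIndepFun Ys μ)
    (α : ℝ) (hα : 0 < α)
    (hpois : ∀ i : ℕ, μ {ω | Y ω = (i : ℝ)} =
      ENNReal.ofReal (Real.exp (-α) * α ^ i / i.factorial))
    (n : ℕ) (x : ℝ) :
    probLahBell μ Ys n x = ∑ k ∈ Finset.range (n + 1), bellPoly k x * α ^ k * Lah n k := by
  have hpois' : ∀ i : ℕ, μ {ω | Y ω = (i : ℝ)} = ENNReal.ofReal (pois α i) := by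
    intro i; rw [hpois i]; rfl
  have hlaw := law_sum μ Y Ys hY hYs hid hindep α hα hpois'
  have hE : ∀ l : ℕ, ∫ ω, asc (∑ j ∈ Finset.range l, Ys j ω) n ∂μ
      = ∑ m ∈ range (n+1), Lah n m * (((l:ℝ))*α)^m := by
    intro l
    exact E_asc μ (Finset.measurable_sum _ fun j _ => hYs j) (by positivity) (hlaw l) n
  have hprob : ∀ k : ℕ, probLah μ Ys n k
      = ∑ m ∈ range (n+1), (Lah n m * α^m) * stirling2 m k := by
    intro k
    unfold probLah
    have h1 : ∑ l ∈ range (k+1), (k.choose l : ℝ) * (-1)^(k-l) *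
        ∫ ω, asc (∑ j ∈ Finset.range l, Ys j ω) n ∂μ
        = ∑ l ∈ range (k+1), ∑ m ∈ range (n+1),
            (Lah n m * α^m) * ((-1:ℝ)^(k-l) * (k.choose l : ℝ) * (l:ℝ)^m) := by
      refine sum_congr rfl fun l _ => ?_
      rw [hE l, mul_sum]
      refine sum_congr rfl fun m _ => ?_
      rw [mul_pow]; ring
    rw [h1, sum_comm, mul_sum]
    refine sum_congr rfl fun m _ => ?_
    rw [← mul_sum]
    unfold stirling2
    ring
  have hbell : ∀ m ∈ range (n+1), ∑ k ∈ range (n+1), stirling2 m k * x^k = bellPoly m x := by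
    intro m hm
    have hmn : m + 1 ≤ n + 1 := by
      have := mem_range.mp hm; omega
    unfold bellPoly
    symm
    refine sum_subset (range_subset_range.mpr hmn) ?_
    intro k hk2 hk
    have hmk : m < k := by
      have h1 : k < n + 1 := mem_range.mp hk2
      have h2 : ¬ k < m + 1 := fun hc => hk (mem_range.mpr hc)
      omega
    rw [stirling2_vanish hmk, zero_mul]
  calc probLahBell μ Ys n x
      = ∑ k ∈ range (n+1), (∑ m ∈ range (n+1), (Lah n m * α^m) * stirling2 m k) * x^k := by
        unfold probLahBell
        exact sum_congr rfl fun k _ => by rw [hprob k]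
    _ = ∑ m ∈ range (n+1), (Lah n m * α^m) * ∑ k ∈ range (n+1), stirling2 m k * x^k := by
        simp_rw [sum_mul]
        rw [sum_comm]
        refine sum_congr rfl fun m _ => ?_
        rw [mul_sum]
        exact sum_congr rfl fun k _ => by ring
    _ = ∑ k ∈ Finset.range (n + 1), bellPoly k x * α ^ k * Lah n k := by
        refine sum_congr rfl fun m hm => ?_
        rw [hbell m hm]; ring
end

section
/- Let $Y$ be a Bernoulli random variable with probability of success $p$. Then for all integers $n \ge 1$ and $0 \le k \le n$, $L_Y(n,k) = p^k L(n,k)$. -/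
open MeasureTheory ProbabilityTheory Finset

/-! ### Auxiliary lemmas about `asc` -/

lemma asc_measurable (n : ℕ) : Measurable fun x : ℝ => asc x n := by
  induction n with
  | zero => simpa [asc] using measurable_const
  | succ n ih =>
    have : (fun x : ℝ => asc x (n + 1)) = fun x => asc x n * (x + n) := by
      funext x; rfl
    rw [this]
    exact ih.mul (measurable_id.add_const _)

lemma asc_natCast (m n : ℕ) : asc (m : ℝ) n = (m.ascFactorial n : ℝ) := by
  induction n with
  | zero => simp [asc]
  | succ n ih =>
    have h : asc (m : ℝ) (n + 1) = asc (m : ℝ) n * ((m : ℝ) + n) := rfl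
    rw [h, ih, Nat.ascFactorial_succ]
    push_cast
    ring

lemma asc_nat_eq (m n : ℕ) :
    asc (m : ℝ) n = (n.factorial : ℝ) * ((m + n - 1).choose n : ℝ) := by
  rw [asc_natCast, Nat.ascFactorial_eq_factorial_mul_choose']
  push_cast
  ring

/-! ### Combinatorial lemmas -/

lemma innerSum (x : ℝ) (k m : ℕ) (hm : m ≤ k) :
    ∑ l ∈ range (k + 1), (k.choose l : ℝ) * (l.choose m : ℝ) * (-1) ^ (k - l) * x ^ (l - m)
      = (k.choose m : ℝ) * (x - 1) ^ (k - m) := by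
  rw [← Finset.sum_subset (s₁ := Ico m (k + 1))
    (fun l hl => by simp only [mem_Ico, mem_range] at *; omega)
    (fun l hl hlm => by
      have hlt : l < m := by simp only [mem_Ico, mem_range] at *; omega
      simp [Nat.choose_eq_zero_of_lt hlt])]
  rw [Finset.sum_Ico_eq_sum_range]
  have hkm : k + 1 - m = (k - m) + 1 := by omega
  rw [hkm]
  have hcongr : ∀ i ∈ range (k - m + 1),
      (k.choose (m + i) : ℝ) * ((m + i).choose m : ℝ) * (-1) ^ (k - (m + i)) * x ^ (m + i - m)
        = (k.choose m : ℝ) * (x ^ i * (-1) ^ ((k - m) - i) * ((k - m).choose i : ℝ)) := by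
    intro i hi
    have hik : m + i ≤ k := by simp only [mem_range] at hi; omega
    have hprod : k.choose (m + i) * (m + i).choose m = k.choose m * (k - m).choose i := by
      have h := Nat.choose_mul (n := k) (Nat.le_add_right m i)
      simpa [Nat.add_sub_cancel_left] using h
    have h2 : m + i - m = i := by omega
    have h3 : k - (m + i) = (k - m) - i := by omega
    rw [h2, h3]
    have hcast : (k.choose (m + i) : ℝ) * ((m + i).choose m : ℝ)
        = (k.choose m : ℝ) * ((k - m).choose i : ℝ) := by
      exact_mod_cast congrArg (Nat.cast : ℕ → ℝ) hprod
    calc (k.choose (m + i) : ℝ) * ((m + i).choose m : ℝ) * (-1) ^ (k - m - i) * x ^ i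
        = ((k.choose (m + i) : ℝ) * ((m + i).choose m : ℝ)) * ((-1) ^ (k - m - i) * x ^ i) := by
          ring
      _ = ((k.choose m : ℝ) * ((k - m).choose i : ℝ)) * ((-1) ^ (k - m - i) * x ^ i) := by
          rw [hcast]
      _ = (k.choose m : ℝ) * (x ^ i * (-1) ^ ((k - m) - i) * ((k - m).choose i : ℝ)) := by
          ring
  rw [Finset.sum_congr rfl hcongr, ← Finset.mul_sum, ← add_pow, ← sub_eq_add_neg]

lemma altsum (k j : ℕ) :
    ∑ m ∈ range (k + 1), (k.choose m : ℝ) * (m.choose j : ℝ) * (-1) ^ (k - m)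
      = if j = k then 1 else 0 := by
  rcases le_or_gt j k with hj | hj
  · have h := innerSum 1 k j hj
    simp only [one_pow, mul_one] at h
    rw [h]
    norm_num
    rcases eq_or_lt_of_le hj with he | hlt
    · simp [he]
    · have : k - j ≠ 0 := by omega
      rw [if_neg (by omega), zero_pow this, mul_zero]
  · rw [if_neg (by omega)]
    apply Finset.sum_eq_zero
    intro m hm
    have : m < j := by simp only [mem_range] at hm; omega
    simp [Nat.choose_eq_zero_of_lt this]

lemma lahsum (n k : ℕ) (hn : 1 ≤ n) (hkn : k ≤ n) :
    ∑ m ∈ range (k + 1), (k.choose m : ℝ) * (-1) ^ (k - m) * asc (m : ℝ) n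
      = (k.factorial : ℝ) * Lah n k := by
  have hvdm : ∀ m : ℕ, ((m + n - 1).choose n : ℝ)
      = ∑ j ∈ range (n + 1), (m.choose j : ℝ) * ((n - 1).choose (n - j) : ℝ) := by
    intro m
    have h1 : m + n - 1 = m + (n - 1) := by omega
    rw [h1, Nat.add_choose_eq,
      Finset.Nat.sum_antidiagonal_eq_sum_range_succ (fun a b => m.choose a * (n - 1).choose b)]
    push_cast
    rfl
  have step1 : ∑ m ∈ range (k + 1), (k.choose m : ℝ) * (-1) ^ (k - m) * asc (m : ℝ) n
      = ∑ m ∈ range (k + 1), ∑ j ∈ range (n + 1),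
          (n.factorial : ℝ) * ((n - 1).choose (n - j) : ℝ)
            * ((k.choose m : ℝ) * (m.choose j : ℝ) * (-1) ^ (k - m)) := by
    apply Finset.sum_congr rfl
    intro m _
    rw [asc_nat_eq, hvdm m, Finset.mul_sum, Finset.mul_sum]
    apply Finset.sum_congr rfl
    intro j _
    ring
  rw [step1, Finset.sum_comm]
  have step2 : ∀ j ∈ range (n + 1),
      ∑ m ∈ range (k + 1), (n.factorial : ℝ) * ((n - 1).choose (n - j) : ℝ)
          * ((k.choose m : ℝ) * (m.choose j : ℝ) * (-1) ^ (k - m))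
        = (n.factorial : ℝ) * ((n - 1).choose (n - j) : ℝ) * (if j = k then 1 else 0) := by
    intro j _
    rw [← Finset.mul_sum, altsum]
  rw [Finset.sum_congr rfl step2]
  have hkmem : k ∈ range (n + 1) := by simp [Nat.lt_succ_iff, hkn]
  simp only [mul_ite, mul_one, mul_zero]
  rw [Finset.sum_ite_eq' (range (n + 1)) k
    (fun j => (n.factorial : ℝ) * ((n - 1).choose (n - j) : ℝ)), if_pos hkmem]
  rcases Nat.eq_zero_or_pos k with hk0 | hkpos
  · subst hk0
    have hlt : n - 1 < n := by omega
    have hne : n ≠ 0 := by omega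
    rw [Nat.sub_zero, Nat.choose_eq_zero_of_lt hlt]
    simp [Lah, hne]
  · have hsymm : (n - 1).choose (n - k) = (n - 1).choose (k - 1) := by
      have h1 : n - k ≤ n - 1 := by omega
      have h2 : (n - 1) - (n - k) = k - 1 := by omega
      rw [← h2, Nat.choose_symm h1]
    rw [hsymm, Lah, if_neg (by omega), if_pos hkn]
    have hfac : (k.factorial : ℝ) ≠ 0 := Nat.cast_ne_zero.2 k.factorial_ne_zero
    field_simp

/-! ### Measure-theoretic lemmas -/

lemma integrable_dirac_sm {f : ℝ → ℝ} (hf : StronglyMeasurable f) (a : ℝ) :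
    Integrable f (Measure.dirac a) := by
  refine ⟨hf.aestronglyMeasurable, ?_⟩
  have : HasFiniteIntegral f (Measure.dirac a) := by
    simp only [HasFiniteIntegral]
    rw [lintegral_dirac' a hf.measurable.enorm]
    exact enorm_lt_top
  exact this

lemma map_finset_sum' {α β ι : Type*} [MeasurableSpace α] [MeasurableSpace β]
    (s : Finset ι) (μs : ι → Measure α) {f : α → β} (hf : Measurable f) :
    Measure.map f (∑ i ∈ s, μs i) = ∑ i ∈ s, Measure.map f (μs i) := by
  classical
  induction s using Finset.induction_on with
  | empty => simp
  | insert _ _ h ih =>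
    rw [Finset.sum_insert h, Finset.sum_insert h, Measure.map_add _ _ hf, ih]

lemma map_add_bernoulli {Ω : Type*} [MeasurableSpace Ω] (μ : Measure Ω)
    [IsProbabilityMeasure μ] {X Z : Ω → ℝ} (hX : Measurable X) (hZ : Measurable Z)
    (hI : IndepFun X Z μ) (p : ℝ) (hp0 : 0 ≤ p) (hp1 : p ≤ 1)
    (h1 : μ (Z ⁻¹' {1}) = ENNReal.ofReal p) (h0 : μ (Z ⁻¹' {0}) = ENNReal.ofReal (1 - p)) :
    Measure.map (fun ω => X ω + Z ω) μ
      = ENNReal.ofReal p • Measure.map (fun ω => X ω + 1) μ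
        + ENNReal.ofReal (1 - p) • Measure.map X μ := by
  ext s hs
  rw [Measure.map_apply (f := fun ω => X ω + Z ω) (hX.add hZ) hs]
  set A := Z ⁻¹' {1} with hA_def
  set B := Z ⁻¹' {0} with hB_def
  have hA : MeasurableSet A := hZ (measurableSet_singleton 1)
  have hB : MeasurableSet B := hZ (measurableSet_singleton 0)
  have hdisj : Disjoint A B := by
    rw [Set.disjoint_left]
    intro ω hω1 hω0
    simp only [hA_def, hB_def, Set.mem_preimage, Set.mem_singleton_iff] at hω1 hω0
    rw [hω1] at hω0; norm_num at hω0
  have hABfull : μ (A ∪ B) = 1 := by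
    rw [measure_union hdisj hB, h1, h0, ← ENNReal.ofReal_add hp0 (by linarith)]
    norm_num
  have hcompl : μ ((A ∪ B)ᶜ) = 0 := by
    rw [measure_compl (hA.union hB) (measure_ne_top μ _), hABfull, measure_univ, tsub_self]
  set T := (fun ω => X ω + Z ω) ⁻¹' s with hT_def
  have hTmeas : MeasurableSet T := (hX.add hZ) hs
  have hTsplit : μ T = μ (T ∩ A) + μ (T ∩ B) := by
    have hsub : μ (T \ (A ∪ B)) = 0 :=
      measure_mono_null (fun x hx => hx.2) hcompl
    have h1' : μ T = μ (T ∩ (A ∪ B)) := by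
      apply le_antisymm
      · calc μ T = μ ((T ∩ (A ∪ B)) ∪ (T \ (A ∪ B))) := by rw [Set.inter_union_diff]
          _ ≤ μ (T ∩ (A ∪ B)) + μ (T \ (A ∪ B)) := measure_union_le _ _
          _ = μ (T ∩ (A ∪ B)) := by rw [hsub, add_zero]
      · exact measure_mono Set.inter_subset_left
    rw [h1', Set.inter_union_distrib_left,
      measure_union (hdisj.mono Set.inter_subset_right Set.inter_subset_right)
        (hTmeas.inter hB)]
  have hTA : T ∩ A = ((fun ω => X ω + 1) ⁻¹' s) ∩ A := by
    ext ω
    simp only [hT_def, hA_def, Set.mem_inter_iff, Set.mem_preimage, Set.mem_singleton_iff]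
    constructor
    · rintro ⟨hin, hz⟩; refine ⟨?_, hz⟩; rwa [hz] at hin
    · rintro ⟨hin, hz⟩; refine ⟨?_, hz⟩; rwa [← hz] at hin
  have hTB : T ∩ B = (X ⁻¹' s) ∩ B := by
    ext ω
    simp only [hT_def, hB_def, Set.mem_inter_iff, Set.mem_preimage, Set.mem_singleton_iff]
    constructor
    · rintro ⟨hin, hz⟩; refine ⟨?_, hz⟩; rwa [hz, add_zero] at hin
    · rintro ⟨hin, hz⟩; refine ⟨?_, hz⟩; rw [hz, add_zero]; exact hin
  have hIA : IndepFun (fun ω => X ω + 1) Z μ :=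
    hI.comp (measurable_id.add_const (1 : ℝ)) measurable_id
  have e1 : μ (((fun ω => X ω + 1) ⁻¹' s) ∩ A)
      = μ ((fun ω => X ω + 1) ⁻¹' s) * ENNReal.ofReal p := by
    rw [← h1]
    exact hIA.measure_inter_preimage_eq_mul s {1} hs (measurableSet_singleton 1)
  have e2 : μ ((X ⁻¹' s) ∩ B) = μ (X ⁻¹' s) * ENNReal.ofReal (1 - p) := by
    rw [← h0]
    exact hI.measure_inter_preimage_eq_mul s {0} hs (measurableSet_singleton 0)
  rw [hTsplit, hTA, hTB, e1, e2, Measure.add_apply, Measure.smul_apply, Measure.smul_apply,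
    Measure.map_apply (f := fun ω => X ω + 1) (hX.add_const 1) hs, Measure.map_apply hX hs, smul_eq_mul, smul_eq_mul]
  ring

lemma lawS {Ω : Type*} [MeasurableSpace Ω] (μ : Measure Ω) [IsProbabilityMeasure μ]
    (Y : Ω → ℝ) (Ys : ℕ → Ω → ℝ) (hYs : ∀ j, Measurable (Ys j))
    (hid : ∀ j, IdentDistrib (Ys j) Y μ μ)
    (hindep : iIndepFun Ys μ)
    (p : ℝ) (hp0 : 0 ≤ p) (hp1 : p ≤ 1)
    (hber1 : μ {ω | Y ω = 1} = ENNReal.ofReal p)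
    (hber0 : μ {ω | Y ω = 0} = ENNReal.ofReal (1 - p)) (l : ℕ) :
    Measure.map (fun ω => ∑ j ∈ Finset.range l, Ys j ω) μ
      = ∑ m ∈ Finset.range (l + 1),
          ENNReal.ofReal ((l.choose m : ℝ) * p ^ m * (1 - p) ^ (l - m))
            • Measure.dirac ((m : ℕ) : ℝ) := by
  have hq0 : (0 : ℝ) ≤ 1 - p := by linarith
  have hsetY1 : Y ⁻¹' {1} = {ω | Y ω = 1} := by ext ω; simp
  have hsetY0 : Y ⁻¹' {0} = {ω | Y ω = 0} := by ext ω; simp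
  induction l with
  | zero =>
    simp only [Finset.range_zero, Finset.sum_empty]
    rw [Measure.map_const, measure_univ]
    simp
  | succ l ih =>
    have hSl : Measurable (fun ω => ∑ j ∈ range l, Ys j ω) :=
      Finset.measurable_sum (range l) (fun j _ => hYs j)
    have hfun : (fun ω => ∑ j ∈ range (l + 1), Ys j ω)
        = fun ω => (∑ j ∈ range l, Ys j ω) + Ys l ω := by
      funext ω; rw [Finset.sum_range_succ]
    have hind : IndepFun (fun ω => ∑ j ∈ range l, Ys j ω) (Ys l) μ := by
      have h := hindep.indepFun_sum_range_succ hYs l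
      have heq : (∑ j ∈ range l, Ys j) = (fun ω => ∑ j ∈ range l, Ys j ω) := by
        funext ω; simp [Finset.sum_apply]
      rwa [heq] at h
    have h1j : μ (Ys l ⁻¹' {1}) = ENNReal.ofReal p := by
      rw [(hid l).measure_mem_eq (measurableSet_singleton 1), hsetY1, hber1]
    have h0j : μ (Ys l ⁻¹' {0}) = ENNReal.ofReal (1 - p) := by
      rw [(hid l).measure_mem_eq (measurableSet_singleton 0), hsetY0, hber0]
    rw [hfun, map_add_bernoulli μ hSl (hYs l) hind p hp0 hp1 h1j h0j]
    have hadd1 : Measurable (fun x : ℝ => x + 1) := measurable_id.add_const 1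
    have hmap1 : Measure.map (fun ω => (∑ j ∈ range l, Ys j ω) + 1) μ
        = Measure.map (fun x : ℝ => x + 1)
            (Measure.map (fun ω => ∑ j ∈ range l, Ys j ω) μ) :=
      (Measure.map_map hadd1 hSl).symm
    rw [hmap1, ih, map_finset_sum' _ _ hadd1]
    simp_rw [Measure.map_smul, Measure.map_dirac' hadd1]
    -- now pure algebra of measures
    have hw : ∀ l' m' : ℕ, (0 : ℝ) ≤ (l'.choose m' : ℝ) * p ^ m' * (1 - p) ^ (l' - m') :=
      fun l' m' => mul_nonneg (mul_nonneg (Nat.cast_nonneg _) (pow_nonneg hp0 _))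
        (pow_nonneg hq0 _)
    rw [Finset.smul_sum, Finset.smul_sum]
    simp_rw [smul_smul]
    have hext : ∑ m ∈ range (l + 1),
        (ENNReal.ofReal (1 - p) * ENNReal.ofReal ((l.choose m : ℝ) * p ^ m * (1 - p) ^ (l - m)))
          • Measure.dirac ((m : ℕ) : ℝ)
        = ∑ m ∈ range (l + 2),
          (ENNReal.ofReal (1 - p) * ENNReal.ofReal ((l.choose m : ℝ) * p ^ m * (1 - p) ^ (l - m)))
            • Measure.dirac ((m : ℕ) : ℝ) := by
      rw [Finset.sum_range_succ (n := l + 1)]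
      simp [Nat.choose_succ_self]
    rw [hext]
    rw [Finset.sum_range_succ' (fun m =>
      (ENNReal.ofReal (1 - p) * ENNReal.ofReal ((l.choose m : ℝ) * p ^ m * (1 - p) ^ (l - m)))
        • Measure.dirac ((m : ℕ) : ℝ)) (l + 1)]
    rw [Finset.sum_range_succ' (fun m =>
      ENNReal.ofReal (((l + 1).choose m : ℝ) * p ^ m * (1 - p) ^ (l + 1 - m))
        • Measure.dirac ((m : ℕ) : ℝ)) (l + 1)]
    have hpt : ∀ m : ℕ, ((m : ℝ) + 1) = (((m + 1 : ℕ) : ℕ) : ℝ) := by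
      intro m; push_cast; ring
    simp_rw [hpt]
    rw [← add_assoc, ← Finset.sum_add_distrib]
    congr 1
    · apply Finset.sum_congr rfl
      intro m hm
      have hml : m ≤ l := by simp only [mem_range] at hm; omega
      rw [← add_smul]
      congr 1
      rw [← ENNReal.ofReal_mul hp0, ← ENNReal.ofReal_mul hq0,
        ← ENNReal.ofReal_add (mul_nonneg hp0 (hw l m)) (mul_nonneg hq0 (hw l (m + 1)))]
      congr 1
      have hsub : l + 1 - (m + 1) = l - m := by omega
      rw [hsub]
      rcases eq_or_lt_of_le hml with he | hlt
      · subst he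
        simp [Nat.choose_succ_self, Nat.choose_self]
        ring
      · have h1 : l - m = (l - (m + 1)) + 1 := by omega
        rw [Nat.choose_succ_succ l m, h1, pow_succ]
        push_cast
        ring
    · rw [← ENNReal.ofReal_mul hq0]
      congr 2
      simp only [Nat.choose_zero_right, Nat.cast_one, pow_zero, Nat.sub_zero]
      ring

lemma integral_asc_eq {Ω : Type*} [MeasurableSpace Ω] (μ : Measure Ω) [IsProbabilityMeasure μ]
    (Y : Ω → ℝ) (Ys : ℕ → Ω → ℝ) (hYs : ∀ j, Measurable (Ys j))
    (hid : ∀ j, IdentDistrib (Ys j) Y μ μ)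
    (hindep : iIndepFun Ys μ)
    (p : ℝ) (hp0 : 0 ≤ p) (hp1 : p ≤ 1)
    (hber1 : μ {ω | Y ω = 1} = ENNReal.ofReal p)
    (hber0 : μ {ω | Y ω = 0} = ENNReal.ofReal (1 - p)) (l n : ℕ) :
    ∫ ω, asc (∑ j ∈ Finset.range l, Ys j ω) n ∂μ
      = ∑ m ∈ Finset.range (l + 1),
          (l.choose m : ℝ) * p ^ m * (1 - p) ^ (l - m) * asc ((m : ℕ) : ℝ) n := by
  have hq0 : (0 : ℝ) ≤ 1 - p := by linarith
  have hw : ∀ m : ℕ, (0 : ℝ) ≤ (l.choose m : ℝ) * p ^ m * (1 - p) ^ (l - m) :=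
    fun m => mul_nonneg (mul_nonneg (Nat.cast_nonneg _) (pow_nonneg hp0 _)) (pow_nonneg hq0 _)
  have hSl : Measurable (fun ω => ∑ j ∈ range l, Ys j ω) :=
    Finset.measurable_sum (range l) (fun j _ => hYs j)
  have hascm : StronglyMeasurable (fun x : ℝ => asc x n) :=
    (asc_measurable n).stronglyMeasurable
  rw [← integral_map hSl.aemeasurable hascm.aestronglyMeasurable]
  rw [lawS μ Y Ys hYs hid hindep p hp0 hp1 hber1 hber0 l]
  rw [integral_finset_sum_measure (fun m _ =>
    (integrable_dirac_sm hascm _).smul_measure ENNReal.ofReal_ne_top)]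
  apply Finset.sum_congr rfl
  intro m _
  rw [integral_smul_measure, integral_dirac' _ _ hascm, ENNReal.toReal_ofReal (hw m),
    smul_eq_mul]

theorem statement_14 {Ω : Type*} [MeasurableSpace Ω] (μ : Measure Ω) [IsProbabilityMeasure μ]
    (Y : Ω → ℝ) (Ys : ℕ → Ω → ℝ)
    (hY : Measurable Y) (hYs : ∀ j, Measurable (Ys j))
    (hid : ∀ j, IdentDistrib (Ys j) Y μ μ)
    (hindep : iIndepFun Ys μ)
    (p : ℝ) (hp0 : 0 ≤ p) (hp1 : p ≤ 1)
    (hber1 : μ {ω | Y ω = 1} = ENNReal.ofReal p)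
    (hber0 : μ {ω | Y ω = 0} = ENNReal.ofReal (1 - p))
    (n k : ℕ) (hn : 1 ≤ n) (hkn : k ≤ n) :
    probLah μ Ys n k = p ^ k * Lah n k := by
  have hint : ∀ l : ℕ, ∫ ω, asc (∑ j ∈ Finset.range l, Ys j ω) n ∂μ
      = ∑ m ∈ Finset.range (l + 1),
          (l.choose m : ℝ) * p ^ m * (1 - p) ^ (l - m) * asc ((m : ℕ) : ℝ) n :=
    fun l => integral_asc_eq μ Y Ys hYs hid hindep p hp0 hp1 hber1 hber0 l n
  rw [probLah]
  have step0 : ∀ l ∈ range (k + 1),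
      (k.choose l : ℝ) * (-1) ^ (k - l) * ∫ ω, asc (∑ j ∈ Finset.range l, Ys j ω) n ∂μ
      = ∑ m ∈ range (k + 1), (k.choose l : ℝ) * (-1) ^ (k - l)
          * ((l.choose m : ℝ) * p ^ m * (1 - p) ^ (l - m) * asc ((m : ℕ) : ℝ) n) := by
    intro l hl
    have hlk : l + 1 ≤ k + 1 := by simp only [mem_range] at hl; omega
    rw [hint l]
    rw [Finset.sum_subset (Finset.range_subset_range.2 hlk) (fun m _ hm => by
      have : l < m := by simp only [mem_range] at *; omega
      simp [Nat.choose_eq_zero_of_lt this])]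
    rw [Finset.mul_sum]
  rw [Finset.sum_congr rfl step0, Finset.sum_comm]
  have step1 : ∀ m ∈ range (k + 1),
      ∑ l ∈ range (k + 1), (k.choose l : ℝ) * (-1) ^ (k - l)
          * ((l.choose m : ℝ) * p ^ m * (1 - p) ^ (l - m) * asc ((m : ℕ) : ℝ) n)
      = p ^ k * ((k.choose m : ℝ) * (-1) ^ (k - m) * asc ((m : ℕ) : ℝ) n) := by
    intro m hm
    have hmk : m ≤ k := by simp only [mem_range] at hm; omega
    have hre : ∀ l ∈ range (k + 1), (k.choose l : ℝ) * (-1) ^ (k - l)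
          * ((l.choose m : ℝ) * p ^ m * (1 - p) ^ (l - m) * asc ((m : ℕ) : ℝ) n)
        = (p ^ m * asc ((m : ℕ) : ℝ) n)
            * ((k.choose l : ℝ) * (l.choose m : ℝ) * (-1) ^ (k - l) * (1 - p) ^ (l - m)) := by
      intro l _; ring
    rw [Finset.sum_congr rfl hre, ← Finset.mul_sum, innerSum (1 - p) k m hmk]
    have h1 : ((1 : ℝ) - p - 1) = -p := by ring
    rw [h1]
    have h2 : (-p) ^ (k - m) = (-1) ^ (k - m) * p ^ (k - m) := by
      rw [neg_pow]
    rw [h2]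
    have h3 : p ^ m * p ^ (k - m) = p ^ k := by
      rw [← pow_add]; congr 1; omega
    calc p ^ m * asc ((m : ℕ) : ℝ) n * ((k.choose m : ℝ) * ((-1) ^ (k - m) * p ^ (k - m)))
        = (p ^ m * p ^ (k - m)) * ((k.choose m : ℝ) * (-1) ^ (k - m) * asc ((m : ℕ) : ℝ) n) := by
          ring
      _ = p ^ k * ((k.choose m : ℝ) * (-1) ^ (k - m) * asc ((m : ℕ) : ℝ) n) := by rw [h3]
  rw [Finset.sum_congr rfl step1, ← Finset.mul_sum, lahsum n k hn hkn]
  have hfac : (k.factorial : ℝ) ≠ 0 := Nat.cast_ne_zero.2 k.factorial_ne_zero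
  field_simp
end
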